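/- Let B → K and C → K be ring homomorphisms with C → K surjective, A = B ×_K C, and let A → A' be a ring homomorphism. If B ⊗_A A' is a finitely generated B-algebra and C ⊗_A A' is a finitely generated C-algebra, then A' is a finitely generated A-algebra. -/

import Mathlib

set_option maxHeartbeats 1000000

open TensorProduct

section Aux

variable {A B C K : Type*} [CommRing A] [CommRing B] [CommRing C] [CommRing K]
    [Algebra A B] [Algebra A C] [Algebra A K] [Algebra B K] [Algebra C K]
    [IsScalarTower A B K] [IsScalarTower A C K]

/-- Key module-theoretic lemma: a module over the fiber product that dies after
base change to both `B` and `C` is trivial. -/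
theorem ferrand_key
    (hsurj : Function.Surjective (algebraMap C K))
    (hpull : ∀ (b : B) (c : C), algebraMap B K b = algebraMap C K c →
      ∃! a : A, algebraMap A B a = b ∧ algebraMap A C a = c)
    (P : Type*) [AddCommGroup P] [Module A P]
    (h1 : Subsingleton (B ⊗[A] P)) (h2 : Subsingleton (C ⊗[A] P)) :
    Subsingleton P := by
  classical
  have surjB : Function.Surjective (algebraMap A B) := by
    intro b
    obtain ⟨c, hc⟩ := hsurj (algebraMap B K b)
    obtain ⟨a, ⟨ha1, _⟩, _⟩ := hpull b c hc.symm
    exact ⟨a, ha1⟩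
  have hofId : Function.Surjective (Algebra.ofId A B) := surjB
  set J : Ideal A := RingHom.ker (Algebra.ofId A B) with hJdef
  have hJmem : ∀ a : A, a ∈ J ↔ algebraMap A B a = 0 := by
    intro a
    rw [hJdef, RingHom.mem_ker, Algebra.ofId_apply]
  -- Step 1 : `J • ⊤ = ⊤` in `P`.
  have e1 : (A ⧸ J) ≃ₐ[A] B := Ideal.quotientKerAlgEquivOfSurjective hofId
  have e2 : (B ⊗[A] P) ≃ₗ[A] ((A ⧸ J) ⊗[A] P) :=
    TensorProduct.congr e1.symm.toLinearEquiv (LinearEquiv.refl A P)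
  have hsub : Subsingleton (P ⧸ (J • ⊤ : Submodule A P)) :=
    Equiv.subsingleton ((TensorProduct.quotTensorEquivQuotSMul (M := P) J).symm.toEquiv.trans
      e2.symm.toEquiv)
  have hJtop : J • (⊤ : Submodule A P) = ⊤ :=
    Submodule.Quotient.subsingleton_iff.mp hsub
  -- Step 2 : every `j • p` with `j ∈ J` is zero.
  have step2 : ∀ j ∈ J, ∀ p : P, j • p = 0 := by
    intro j hj p
    have hjB : algebraMap A B j = 0 := (hJmem j).mp hj
    have hjK : algebraMap C K (algebraMap A C j) = 0 := by
      rw [← IsScalarTower.algebraMap_apply, IsScalarTower.algebraMap_apply A B K, hjB, map_zero]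
    have hkey : ∀ c : C, algebraMap B K 0 = algebraMap C K (c * algebraMap A C j) := by
      intro c
      rw [map_zero, map_mul, hjK, mul_zero]
    set g : C → A := fun c => (hpull 0 (c * algebraMap A C j) (hkey c)).choose with hgdef
    have hg : ∀ c : C, algebraMap A B (g c) = 0 ∧
        algebraMap A C (g c) = c * algebraMap A C j := fun c =>
      (hpull 0 (c * algebraMap A C j) (hkey c)).choose_spec.1
    have hu : ∀ c : C, ∀ a : A, algebraMap A B a = 0 →
        algebraMap A C a = c * algebraMap A C j → a = g c := fun c a h1' h2' =>
      (hpull 0 (c * algebraMap A C j) (hkey c)).choose_spec.2 a ⟨h1', h2'⟩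
    have hadd : ∀ c c' : C, g (c + c') = g c + g c' := by
      intro c c'
      refine ((hu (c + c') (g c + g c') ?_ ?_)).symm
      · rw [map_add, (hg c).1, (hg c').1, add_zero]
      · rw [map_add, (hg c).2, (hg c').2, add_mul]
    have hsmul : ∀ (a : A) (c : C), g (a • c) = a * g c := by
      intro a c
      refine ((hu (a • c) (a * g c) ?_ ?_)).symm
      · rw [map_mul, (hg c).1, mul_zero]
      · rw [map_mul, (hg c).2, Algebra.smul_def, mul_assoc]
    have hone : g 1 = j := by
      refine ((hu 1 j hjB ?_)).symm
      rw [one_mul]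
    let F : C →ₗ[A] P →ₗ[A] P :=
      { toFun := fun c =>
          { toFun := fun q => g c • q
            map_add' := fun q r => smul_add _ _ _
            map_smul' := fun a q => smul_comm (g c) a q }
        map_add' := fun c c' => LinearMap.ext fun q => by
          simp only [LinearMap.coe_mk, AddHom.coe_mk, LinearMap.add_apply]
          rw [hadd, add_smul]
        map_smul' := fun a c => LinearMap.ext fun q => by
          simp only [LinearMap.coe_mk, AddHom.coe_mk, RingHom.id_apply, LinearMap.smul_apply]
          rw [hsmul, mul_smul] }
    have : j • p = TensorProduct.lift F ((1 : C) ⊗ₜ[A] p) := by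
      simp only [TensorProduct.lift.tmul]
      simp only [F, LinearMap.coe_mk, AddHom.coe_mk, hone]
    rw [this, Subsingleton.elim ((1 : C) ⊗ₜ[A] p) 0, map_zero]
  -- Step 3 : combine.
  refine subsingleton_of_forall_eq 0 fun p => ?_
  have hp : p ∈ J • (⊤ : Submodule A P) := by
    rw [hJtop]; exact Submodule.mem_top
  refine Submodule.smul_induction_on hp (fun j hj q _ => step2 j hj q) ?_
  intro x y hx hy
  rw [hx, hy, add_zero]

variable (A) in
/-- Every element of `B ⊗[A] A'` lies in the `B`-span of finitely many `1 ⊗ a`. -/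
theorem ferrand_mem_fin {A' : Type*} [CommRing A'] [Algebra A A'] (x : B ⊗[A] A') :
    ∃ t : Finset A', x ∈ Submodule.span B ((fun a : A' => (1 : B) ⊗ₜ[A] a) '' ↑t) := by
  classical
  induction x with
  | zero => exact ⟨∅, zero_mem _⟩
  | tmul b a =>
    refine ⟨{a}, ?_⟩
    have : b ⊗ₜ[A] a = b • ((1 : B) ⊗ₜ[A] a) := by
      rw [TensorProduct.smul_tmul', smul_eq_mul, mul_one]
    rw [this]
    exact Submodule.smul_mem _ _ (Submodule.subset_span ⟨a, by simp⟩)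
  | add x y hx hy =>
    obtain ⟨t1, ht1⟩ := hx
    obtain ⟨t2, ht2⟩ := hy
    refine ⟨t1 ∪ t2, add_mem ?_ ?_⟩
    · exact Submodule.span_mono
        (Set.image_mono (Finset.coe_subset.2 Finset.subset_union_left)) ht1
    · exact Submodule.span_mono
        (Set.image_mono (Finset.coe_subset.2 Finset.subset_union_right)) ht2

variable (A) in
theorem ferrand_finset_fin {A' : Type*} [CommRing A'] [Algebra A A'] (s : Finset (B ⊗[A] A')) :
    ∃ t : Finset A',
      (↑s : Set (B ⊗[A] A')) ⊆
        ↑(Submodule.span B ((fun a : A' => (1 : B) ⊗ₜ[A] a) '' ↑t)) := by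
  classical
  induction s using Finset.induction with
  | empty => exact ⟨∅, by simp⟩
  | @insert a s ha ih =>
    obtain ⟨t1, ht1⟩ := ih
    obtain ⟨t2, ht2⟩ := ferrand_mem_fin A a
    refine ⟨t1 ∪ t2, ?_⟩
    intro y hy
    rcases Finset.mem_insert.mp hy with rfl | hy
    · exact Submodule.span_mono
        (Set.image_mono (Finset.coe_subset.2 Finset.subset_union_right)) ht2
    · exact Submodule.span_mono
        (Set.image_mono (Finset.coe_subset.2 Finset.subset_union_left)) (ht1 hy)

end Aux

/-- Descent of finite generation of algebras through a Ferrand fiber product: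
if `B ⊗_A A'` and `C ⊗_A A'` are finitely generated algebras, so is `A'`. -/
theorem ferrand_descent_finiteType
    (A B C K : Type*) [CommRing A] [CommRing B] [CommRing C] [CommRing K]
    [Algebra A B] [Algebra A C] [Algebra A K] [Algebra B K] [Algebra C K]
    [IsScalarTower A B K] [IsScalarTower A C K]
    (hsurj : Function.Surjective (algebraMap C K))
    (hpull : ∀ (b : B) (c : C), algebraMap B K b = algebraMap C K c →
      ∃! a : A, algebraMap A B a = b ∧ algebraMap A C a = c)
    (A' : Type*) [CommRing A'] [Algebra A A']
    (hB : Algebra.FiniteType B (B ⊗[A] A'))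
    (hC : Algebra.FiniteType C (C ⊗[A] A')) :
    Algebra.FiniteType A A' := by
  classical
  obtain ⟨sB, hsB⟩ := hB.out
  obtain ⟨sC, hsC⟩ := hC.out
  obtain ⟨tB, htB⟩ := ferrand_finset_fin A sB
  obtain ⟨tC, htC⟩ := ferrand_finset_fin A sC
  set S : Subalgebra A A' := Algebra.adjoin A (↑(tB ∪ tC) : Set A') with hSdef
  -- membership of generators in S
  have hmem : ∀ a ∈ tB ∪ tC, a ∈ S := fun a ha => Algebra.subset_adjoin (by exact_mod_cast ha)
  -- `B ⊗ S → B ⊗ A'` is surjective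
  have adjoinB : Algebra.adjoin B ((fun a : A' => (1 : B) ⊗ₜ[A] a) '' ↑tB) = ⊤ := by
    rw [← top_le_iff, ← hsB]
    refine Algebra.adjoin_le fun x hx => ?_
    have hx' := htB hx
    have : Submodule.span B ((fun a : A' => (1 : B) ⊗ₜ[A] a) '' ↑tB) ≤
        Subalgebra.toSubmodule (Algebra.adjoin B ((fun a : A' => (1 : B) ⊗ₜ[A] a) '' ↑tB)) :=
      Submodule.span_le.mpr Algebra.subset_adjoin
    exact this hx'
  have adjoinC : Algebra.adjoin C ((fun a : A' => (1 : C) ⊗ₜ[A] a) '' ↑tC) = ⊤ := by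
    rw [← top_le_iff, ← hsC]
    refine Algebra.adjoin_le fun x hx => ?_
    have hx' := htC hx
    have : Submodule.span C ((fun a : A' => (1 : C) ⊗ₜ[A] a) '' ↑tC) ≤
        Subalgebra.toSubmodule (Algebra.adjoin C ((fun a : A' => (1 : C) ⊗ₜ[A] a) '' ↑tC)) :=
      Submodule.span_le.mpr Algebra.subset_adjoin
    exact this hx'
  -- the tensor of the inclusion is surjective (for B)
  have surjltB : Function.Surjective (LinearMap.lTensor B (Subalgebra.toSubmodule S).subtype) := by
    let φ : B ⊗[A] S →ₐ[B] B ⊗[A] A' := Algebra.TensorProduct.map (AlgHom.id B B) S.val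
    have heq : LinearMap.lTensor B (Subalgebra.toSubmodule S).subtype =
        (LinearMap.restrictScalars A φ.toLinearMap) := by
      refine TensorProduct.ext' fun b s => ?_
      simp only [LinearMap.lTensor_tmul, Submodule.coe_subtype, LinearMap.coe_restrictScalars,
        AlgHom.toLinearMap_apply, φ]
      rfl
    have hrange : ⊤ ≤ φ.range := by
      rw [← adjoinB]
      refine Algebra.adjoin_le fun x hx => ?_
      obtain ⟨a, ha, rfl⟩ := hx
      exact ⟨(1 : B) ⊗ₜ[A] (⟨a, hmem a (Finset.mem_union_left _ ha)⟩ : S), by simp [φ]⟩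
    intro y
    obtain ⟨z, hz⟩ := hrange (Set.mem_univ y)
    exact ⟨z, by rw [heq]; exact hz⟩
  have surjltC : Function.Surjective (LinearMap.lTensor C (Subalgebra.toSubmodule S).subtype) := by
    let φ : C ⊗[A] S →ₐ[C] C ⊗[A] A' := Algebra.TensorProduct.map (AlgHom.id C C) S.val
    have heq : LinearMap.lTensor C (Subalgebra.toSubmodule S).subtype =
        (LinearMap.restrictScalars A φ.toLinearMap) := by
      refine TensorProduct.ext' fun b s => ?_
      simp only [LinearMap.lTensor_tmul, Submodule.coe_subtype, LinearMap.coe_restrictScalars,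
        AlgHom.toLinearMap_apply, φ]
      rfl
    have hrange : ⊤ ≤ φ.range := by
      rw [← adjoinC]
      refine Algebra.adjoin_le fun x hx => ?_
      obtain ⟨a, ha, rfl⟩ := hx
      exact ⟨(1 : C) ⊗ₜ[A] (⟨a, hmem a (Finset.mem_union_right _ ha)⟩ : S), by simp [φ]⟩
    intro y
    obtain ⟨z, hz⟩ := hrange (Set.mem_univ y)
    exact ⟨z, by rw [heq]; exact hz⟩
  -- the quotient module
  set M : Submodule A A' := Subalgebra.toSubmodule S with hMdef
  have hcomp : M.mkQ ∘ₗ M.subtype = 0 :=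
    LinearMap.ext fun s => (Submodule.Quotient.mk_eq_zero _).2 s.2
  have subB : Subsingleton (B ⊗[A] (A' ⧸ M)) := by
    refine subsingleton_of_forall_eq 0 fun y => ?_
    obtain ⟨x, rfl⟩ := LinearMap.lTensor_surjective B (Submodule.mkQ_surjective M) y
    obtain ⟨z, rfl⟩ := surjltB x
    rw [← LinearMap.comp_apply, ← LinearMap.lTensor_comp, hcomp, LinearMap.lTensor_zero,
      LinearMap.zero_apply]
  have subC : Subsingleton (C ⊗[A] (A' ⧸ M)) := by
    refine subsingleton_of_forall_eq 0 fun y => ?_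
    obtain ⟨x, rfl⟩ := LinearMap.lTensor_surjective C (Submodule.mkQ_surjective M) y
    obtain ⟨z, rfl⟩ := surjltC x
    rw [← LinearMap.comp_apply, ← LinearMap.lTensor_comp, hcomp, LinearMap.lTensor_zero,
      LinearMap.zero_apply]
  have := ferrand_key hsurj hpull (A' ⧸ M) subB subC
  have hMtop : M = ⊤ := Submodule.Quotient.subsingleton_iff.mp this
  have hStop : S = ⊤ := Algebra.toSubmodule_eq_top.mp hMtop
  exact ⟨⟨tB ∪ tC, hStop⟩⟩
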